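/- Let P be a set of 2n points in regular wheel configuration in the plane (2n−1 points regularly spaced on a circle plus the center), with n ≥ 2. If uv is a non-radial edge (i.e., neither endpoint is the center), then the line segment uv separates P − {u, v} into two parts A and A(x), where A(x) contains the center x, and moreover |A| ≤ n − 2 and |A(x)| ≥ n. -/
import Mathlib

open scoped Real

namespace WheelCfg

/-- Vertex type of the wheel on `2n` points: `none` is the center,
`some i` is the `i`-th of the `2n-1` regularly spaced circle points. -/
abbrev WV (n : ℕ) := Option (Fin (2*n-1))

/-- Positions of the points of a regular wheel configuration with center `c`,
radius `R` and initial angle `θ`. -/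
noncomputable def wpos (n : ℕ) (c : ℝ × ℝ) (R θ : ℝ) : WV n → ℝ × ℝ
  | none => c
  | some i => (c.1 + R * Real.cos (θ + 2*π*i.val/(2*n-1)),
               c.2 + R * Real.sin (θ + 2*π*i.val/(2*n-1)))

/-- A radial edge: one endpoint is the center. -/
def Radial {n : ℕ} : WV n → WV n → Prop
  | none, _ => True
  | _, none => True
  | some _, some _ => False

/-- A boundary edge: joins two cyclically consecutive circle points. -/
def Boundary {n : ℕ} : WV n → WV n → Prop
  | some i, some j => (i.val + 1) % (2*n-1) = j.val ∨ (j.val + 1) % (2*n-1) = i.val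
  | _, _ => False

/-- Non-crossing: distinct edges have disjoint open segments. -/
def NonCrossing {n : ℕ} (pos : WV n → ℝ × ℝ) (T : SimpleGraph (WV n)) : Prop :=
  ∀ a b c d : WV n, T.Adj a b → T.Adj c d → s(a,b) ≠ s(c,d) →
    Disjoint (openSegment ℝ (pos a) (pos b)) (openSegment ℝ (pos c) (pos d))

/-- A plane spanning tree of the wheel configuration. -/
def PlaneSpanningTree {n : ℕ} (pos : WV n → ℝ × ℝ) (T : SimpleGraph (WV n)) : Prop :=
  T.IsTree ∧ NonCrossing pos T

/-- A partition of the edge set of the complete geometric graph into `n` graphs. -/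
def IsPartition {n : ℕ} (T : Fin n → SimpleGraph (WV n)) : Prop :=
  ∀ a b : WV n, a ≠ b → ∃! i : Fin n, (T i).Adj a b

/-- The cyclic successor of a circle point. -/
def nxt {m : ℕ} (k : Fin m) : Fin m := ⟨(k.val + 1) % m, Nat.mod_lt _ k.pos⟩

/-- The number of boundary edges of `T`. -/
noncomputable def boundaryCount {n : ℕ} (T : SimpleGraph (WV n)) : ℕ :=
  Set.ncard {k : Fin (2*n-1) | T.Adj (some k) (some (nxt k))}

/-- The number of radial edges of `T`. -/
noncomputable def radialCount {n : ℕ} (T : SimpleGraph (WV n)) : ℕ :=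
  Set.ncard {k : Fin (2*n-1) | T.Adj none (some k)}

/-- The circle point with index `k` (mod `2n-1`). -/
def cir (n : ℕ) (h : 0 < 2*n-1) (k : ℕ) : WV n := some ⟨k % (2*n-1), Nat.mod_lt _ h⟩

/-- Signed side of point `p` with respect to the oriented line through `u`, `v`. -/
def sideVal (u v p : ℝ × ℝ) : ℝ :=
  (v.1 - u.1) * (p.2 - u.2) - (v.2 - u.2) * (p.1 - u.1)

end WheelCfg
namespace WheelAux
open WheelCfg

lemma sv_center (c : ℝ × ℝ) (R A B : ℝ) :
    sideVal (c.1 + R*Real.cos A, c.2 + R*Real.sin A)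
      (c.1 + R*Real.cos B, c.2 + R*Real.sin B) c
      = 2*R^2 * Real.sin ((B-A)/2) * Real.cos ((B-A)/2) := by
  have h1 : Real.sin (B-A) = 2*Real.sin ((B-A)/2)*Real.cos ((B-A)/2) := by
    rw [← Real.sin_two_mul]; ring_nf
  have h2 := Real.sin_sub B A
  simp only [sideVal]
  linear_combination (R^2) * h1 - (R^2) * h2

lemma sv_point (c : ℝ × ℝ) (R A B C : ℝ) :
    sideVal (c.1 + R*Real.cos A, c.2 + R*Real.sin A)
      (c.1 + R*Real.cos B, c.2 + R*Real.sin B)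
      (c.1 + R*Real.cos C, c.2 + R*Real.sin C)
      = 4*R^2 * Real.sin ((B-A)/2) * Real.sin ((C-A)/2) * Real.sin ((C-B)/2) := by
  have e1 := Real.cos_sub_cos B A
  have e2 := Real.sin_sub_sin C A
  have e3 := Real.sin_sub_sin B A
  have e4 := Real.cos_sub_cos C A
  have e5 : Real.sin ((C-B)/2)
      = Real.sin ((C+A)/2) * Real.cos ((B+A)/2) - Real.cos ((C+A)/2) * Real.sin ((B+A)/2) := by
    rw [← Real.sin_sub]; ring_nf
  have E : sideVal (c.1 + R*Real.cos A, c.2 + R*Real.sin A)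
      (c.1 + R*Real.cos B, c.2 + R*Real.sin B)
      (c.1 + R*Real.cos C, c.2 + R*Real.sin C)
      = R^2 * ((Real.cos B - Real.cos A) * (Real.sin C - Real.sin A)
        - (Real.sin B - Real.sin A) * (Real.cos C - Real.cos A)) := by
    simp only [sideVal]; ring
  rw [E, e1, e2, e3, e4]
  linear_combination (-4*R^2 * Real.sin ((B-A)/2) * Real.sin ((C-A)/2)) * e5

lemma sin_sign_pos {M t : ℝ} (hM : 0 < M) (h0 : 0 < t) (h1 : t < M) :
    0 < Real.sin (π*t/M) := by
  apply Real.sin_pos_of_pos_of_lt_pi (by positivity)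
  rw [div_lt_iff₀ hM]; nlinarith [Real.pi_pos]

lemma sin_sign_neg {M t : ℝ} (hM : 0 < M) (h0 : t < 0) (h1 : -M < t) :
    Real.sin (π*t/M) < 0 := by
  have h := sin_sign_pos hM (by linarith : 0 < -t) (by linarith)
  have e : π*(-t)/M = -(π*t/M) := by ring
  rw [e, Real.sin_neg] at h; linarith

lemma cos_sign_pos {M t : ℝ} (hM : 0 < M) (h0 : -M < 2*t) (h1 : 2*t < M) :
    0 < Real.cos (π*t/M) := by
  apply Real.cos_pos_of_mem_Ioo
  constructor
  · rw [lt_div_iff₀ hM]; nlinarith [Real.pi_pos]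
  · rw [div_lt_iff₀ hM]; nlinarith [Real.pi_pos]

lemma cos_sign_neg {M t : ℝ} (hM : 0 < M) (h0 : M < 2*t) (h1 : t < M) :
    Real.cos (π*t/M) < 0 := by
  apply Real.cos_neg_of_pi_div_two_lt_of_lt
  · rw [lt_div_iff₀ hM]; nlinarith [Real.pi_pos]
  · rw [div_lt_iff₀ hM]; nlinarith [Real.pi_pos]

lemma ncard_Ioo_fin (m lo hi : ℕ) (hhi : hi ≤ m) :
    Set.ncard {k : Fin m | lo < k.val ∧ k.val < hi} = hi - lo - 1 := by
  classical
  rw [Set.ncard_eq_toFinset_card', Set.toFinset_setOf, ← Nat.card_Ioo lo hi]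
  apply Finset.card_bij (fun (k : Fin m) _ => k.val)
  · intro k hk; simp only [Finset.mem_filter] at hk; simp [Finset.mem_Ioo, hk.2.1, hk.2.2]
  · intro k1 _ k2 _ h; exact Fin.val_injective h
  · intro v hv
    simp only [Finset.mem_Ioo] at hv
    exact ⟨⟨v, lt_of_lt_of_le hv.2 hhi⟩, by simp [hv.1, hv.2], rfl⟩

lemma ncard_out_fin (m lo hi : ℕ) (hlo : lo ≤ hi) (hhi : hi < m) :
    Set.ncard {k : Fin m | k.val < lo ∨ hi < k.val} = m - 1 - (hi - lo) := by
  classical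
  rw [Set.ncard_eq_toFinset_card', Set.toFinset_setOf]
  have hd : Disjoint (Finset.Iio lo) (Finset.Ioo hi m) := by
    rw [Finset.disjoint_left]
    intro v hv1 hv2
    simp only [Finset.mem_Iio] at hv1
    simp only [Finset.mem_Ioo] at hv2
    omega
  have hc : (Finset.Iio lo ∪ Finset.Ioo hi m).card = m - 1 - (hi - lo) := by
    rw [Finset.card_union_of_disjoint hd, Nat.card_Iio, Nat.card_Ioo]; omega
  rw [← hc]
  apply Finset.card_bij (fun (k : Fin m) _ => k.val)
  · intro k hk; simp only [Finset.mem_filter] at hk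
    simp only [Finset.mem_union, Finset.mem_Iio, Finset.mem_Ioo]
    rcases hk.2 with h | h
    · exact Or.inl h
    · exact Or.inr ⟨h, k.isLt⟩
  · intro k1 _ k2 _ h; exact Fin.val_injective h
  · intro v hv
    simp only [Finset.mem_union, Finset.mem_Iio, Finset.mem_Ioo] at hv
    have hvm : v < m := by omega
    refine ⟨⟨v, hvm⟩, ?_, rfl⟩
    simp only [Finset.mem_filter, Finset.mem_univ, true_and]
    rcases hv with h | h
    · exact Or.inl h
    · exact Or.inr h.1

end WheelAux

set_option maxHeartbeats 1000000 in
open WheelCfg in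

/-- A non-radial edge `uv` of a regular wheel configuration of `2n` points separates the
remaining points into a part `A` (opposite side from the center) and a part `A(x)`
(containing the center `x`), with `|A| ≤ n - 2` and `|A(x)| ≥ n`. -/
theorem stmt0 (n : ℕ) (hn : 2 ≤ n) (c : ℝ × ℝ) (R θ : ℝ) (hR : 0 < R)
    (i j : Fin (2*n-1)) (hij : i ≠ j) :
    sideVal (wpos n c R θ (some i)) (wpos n c R θ (some j)) c ≠ 0 ∧
    (∀ k : Fin (2*n-1), k ≠ i → k ≠ j →
      sideVal (wpos n c R θ (some i)) (wpos n c R θ (some j)) (wpos n c R θ (some k)) ≠ 0) ∧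
    Set.ncard {k : Fin (2*n-1) | k ≠ i ∧ k ≠ j ∧
        sideVal (wpos n c R θ (some i)) (wpos n c R θ (some j)) (wpos n c R θ (some k)) *
          sideVal (wpos n c R θ (some i)) (wpos n c R θ (some j)) c < 0} ≤ n - 2 ∧
    n ≤ 1 + Set.ncard {k : Fin (2*n-1) | k ≠ i ∧ k ≠ j ∧
        0 < sideVal (wpos n c R θ (some i)) (wpos n c R θ (some j)) (wpos n c R θ (some k)) *
          sideVal (wpos n c R θ (some i)) (wpos n c R θ (some j)) c} := by
  classical
  have hm3 : 3 ≤ 2*n-1 := by omega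
  set Mr : ℝ := 2*(n:ℝ)-1 with hMrdef
  have hmR : ((2*n-1 : ℕ):ℝ) = Mr := by
    rw [hMrdef]
    push_cast [Nat.cast_sub (by omega : 1 ≤ 2*n)]
    ring
  have hMr : 0 < Mr := by
    rw [← hmR]; exact_mod_cast (by omega : 0 < (2*n-1))
  have hP : ∀ k : Fin (2*n-1), wpos n c R θ (some k)
      = (c.1 + R*Real.cos (θ + 2*π*(k.val:ℝ)/Mr), c.2 + R*Real.sin (θ + 2*π*(k.val:ℝ)/Mr)) := by
    intro k; rw [hMrdef]; rfl
  have hang : ∀ u v : ℕ, ((θ + 2*π*(v:ℝ)/Mr) - (θ + 2*π*(u:ℝ)/Mr))/2 = π*((v:ℝ)-(u:ℝ))/Mr := by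
    intro u v; field_simp; ring
  -- sign helpers
  have SP : ∀ u v : ℕ, u < v → v < (2*n-1) → 0 < Real.sin (π*((v:ℝ)-(u:ℝ))/Mr) := by
    intro u v huv hvm
    apply WheelAux.sin_sign_pos hMr
    · have : (u:ℝ) < (v:ℝ) := by exact_mod_cast huv
      linarith
    · have h1 : (v:ℝ) < ((2*n-1:ℕ):ℝ) := by exact_mod_cast hvm
      rw [hmR] at h1
      have h2 : (0:ℝ) ≤ (u:ℝ) := Nat.cast_nonneg u
      linarith
  have SN : ∀ u v : ℕ, v < u → u < (2*n-1) → Real.sin (π*((v:ℝ)-(u:ℝ))/Mr) < 0 := by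
    intro u v hvu hum
    apply WheelAux.sin_sign_neg hMr
    · have : (v:ℝ) < (u:ℝ) := by exact_mod_cast hvu
      linarith
    · have h1 : (u:ℝ) < ((2*n-1:ℕ):ℝ) := by exact_mod_cast hum
      rw [hmR] at h1
      have h2 : (0:ℝ) ≤ (v:ℝ) := Nat.cast_nonneg v
      linarith
  have SNE : ∀ u v : ℕ, u < (2*n-1) → v < (2*n-1) → u ≠ v → Real.sin (π*((v:ℝ)-(u:ℝ))/Mr) ≠ 0 := by
    intro u v hu hv huv
    rcases lt_or_gt_of_ne huv with h | h
    · exact ne_of_gt (SP u v h hv)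
    · exact ne_of_lt (SN u v h hu)
  have hval : i.val ≠ j.val := fun h => hij (Fin.ext h)
  obtain ⟨lo, hi, hlohi, hhim, hcases⟩ :
      ∃ lo hi : ℕ, lo < hi ∧ hi < (2*n-1) ∧ ((lo = i.val ∧ hi = j.val) ∨ (lo = j.val ∧ hi = i.val)) := by
    rcases lt_or_gt_of_ne hval with h | h
    · exact ⟨i.val, j.val, h, j.isLt, Or.inl ⟨rfl, rfl⟩⟩
    · exact ⟨j.val, i.val, h, i.isLt, Or.inr ⟨rfl, rfl⟩⟩
  have hk_ne : ∀ k : Fin (2*n-1), (k ≠ i ∧ k ≠ j) ↔ (k.val ≠ lo ∧ k.val ≠ hi) := by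
    intro k
    have h1 : (k ≠ i) ↔ k.val ≠ i.val := by rw [ne_eq, ne_eq, Fin.ext_iff]
    have h2 : (k ≠ j) ↔ k.val ≠ j.val := by rw [ne_eq, ne_eq, Fin.ext_iff]
    rcases hcases with ⟨h3, h4⟩ | ⟨h3, h4⟩
    · rw [h1, h2, h3, h4]
    · rw [h1, h2, h3, h4]
      exact and_comm
  set s1 : ℝ := Real.sin (π*((j.val:ℝ)-(i.val:ℝ))/Mr) with hs1def
  set cc : ℝ := Real.cos (π*((hi:ℝ)-(lo:ℝ))/Mr) with hccdef
  have hs1 : s1 ≠ 0 := SNE i.val j.val i.isLt j.isLt hval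
  have hs1sq : 0 < s1^2 := by rcases hs1.lt_or_gt with h | h <;> nlinarith
  have hcos_eq : Real.cos (π*((j.val:ℝ)-(i.val:ℝ))/Mr) = cc := by
    rcases hcases with ⟨h3, h4⟩ | ⟨h3, h4⟩
    · rw [hccdef, h3, h4]
    · have e : π*((j.val:ℝ)-(i.val:ℝ))/Mr = -(π*((hi:ℝ)-(lo:ℝ))/Mr) := by
        rw [h3, h4]; ring
      rw [hccdef, e, Real.cos_neg]
  have hprod_swap : ∀ e : ℕ,
      Real.sin (π*((e:ℝ)-(i.val:ℝ))/Mr) * Real.sin (π*((e:ℝ)-(j.val:ℝ))/Mr)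
        = Real.sin (π*((e:ℝ)-(lo:ℝ))/Mr) * Real.sin (π*((e:ℝ)-(hi:ℝ))/Mr) := by
    intro e
    rcases hcases with ⟨h3, h4⟩ | ⟨h3, h4⟩
    · rw [h3, h4]
    · rw [h3, h4]; ring
  have hsvc : sideVal (wpos n c R θ (some i)) (wpos n c R θ (some j)) c = 2*R^2 * s1 * cc := by
    rw [hP i, hP j, WheelAux.sv_center, hang i.val j.val, hcos_eq, hs1def]
  have hsvk : ∀ k : Fin (2*n-1),
      sideVal (wpos n c R θ (some i)) (wpos n c R θ (some j)) (wpos n c R θ (some k))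
        = 4*R^2 * s1 * Real.sin (π*((k.val:ℝ)-(i.val:ℝ))/Mr)
            * Real.sin (π*((k.val:ℝ)-(j.val:ℝ))/Mr) := by
    intro k
    rw [hP i, hP j, hP k, WheelAux.sv_point, hang i.val j.val, hang i.val k.val,
      hang j.val k.val, hs1def]
  have hProd : ∀ k : Fin (2*n-1),
      sideVal (wpos n c R θ (some i)) (wpos n c R θ (some j)) (wpos n c R θ (some k)) *
        sideVal (wpos n c R θ (some i)) (wpos n c R θ (some j)) c
      = 8*R^4 * s1^2 * cc *
          (Real.sin (π*((k.val:ℝ)-(lo:ℝ))/Mr) * Real.sin (π*((k.val:ℝ)-(hi:ℝ))/Mr)) := by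
    intro k
    rw [hsvk k, hsvc]
    linear_combination (8*R^4*s1^2*cc) * hprod_swap k.val
  have hR4 : (0:ℝ) < 8*R^4 := by positivity
  have claim1 : cc ≠ 0 → sideVal (wpos n c R θ (some i)) (wpos n c R θ (some j)) c ≠ 0 := by
    intro hcc
    rw [hsvc]
    exact mul_ne_zero (mul_ne_zero (by positivity) hs1) hcc
  have claim2 : ∀ k : Fin (2*n-1), k ≠ i → k ≠ j →
      sideVal (wpos n c R θ (some i)) (wpos n c R θ (some j)) (wpos n c R θ (some k)) ≠ 0 := by
    intro k hki hkj
    have hkv := (hk_ne k).1 ⟨hki, hkj⟩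
    have hkvi : k.val ≠ i.val := fun h => hki (Fin.ext h)
    have hkvj : k.val ≠ j.val := fun h => hkj (Fin.ext h)
    rw [hsvk k]
    exact mul_ne_zero (mul_ne_zero (mul_ne_zero (by positivity) hs1)
      (SNE i.val k.val i.isLt k.isLt hkvi.symm)) (SNE j.val k.val j.isLt k.isLt hkvj.symm)
  rcases Nat.lt_or_ge (2*(hi-lo)) (2*n-1) with hD | hD
  · -- minor arc is between lo and hi : cc > 0
    have hccpos : 0 < cc := by
      rw [hccdef]
      apply WheelAux.cos_sign_pos hMr
      · have h2 : (lo:ℝ) ≤ (hi:ℝ) := by exact_mod_cast le_of_lt hlohi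
        linarith
      · have h1 : ((2*(hi-lo):ℕ):ℝ) < ((2*n-1:ℕ):ℝ) := by exact_mod_cast hD
        rw [hmR] at h1
        push_cast [Nat.cast_sub (le_of_lt hlohi)] at h1
        linarith
    have hC : 0 < 8*R^4*s1^2*cc := mul_pos (mul_pos hR4 hs1sq) hccpos
    refine ⟨claim1 (ne_of_gt hccpos), claim2, ?_, ?_⟩
    · -- negative side inside (lo, hi)
      have hsub : {k : Fin (2*n-1) | k ≠ i ∧ k ≠ j ∧
          sideVal (wpos n c R θ (some i)) (wpos n c R θ (some j)) (wpos n c R θ (some k)) *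
            sideVal (wpos n c R θ (some i)) (wpos n c R θ (some j)) c < 0}
          ⊆ {k : Fin (2*n-1) | lo < k.val ∧ k.val < hi} := by
        intro k hk
        simp only [Set.mem_setOf_eq] at hk ⊢
        obtain ⟨hki, hkj, hneg⟩ := hk
        have hkv := (hk_ne k).1 ⟨hki, hkj⟩
        rw [hProd k] at hneg
        have hss : Real.sin (π*((k.val:ℝ)-(lo:ℝ))/Mr) * Real.sin (π*((k.val:ℝ)-(hi:ℝ))/Mr) < 0 := by
          by_contra hcon
          push_neg at hcon
          nlinarith [mul_nonneg (le_of_lt hC) hcon]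
        constructor
        · rcases Nat.lt_or_ge k.val lo with h | h
          · exfalso
            have h1 := SN lo k.val h (by omega)
            have h2 := SN hi k.val (by omega) hhim
            nlinarith [mul_pos_of_neg_of_neg h1 h2]
          · omega
        · rcases Nat.lt_or_ge hi k.val with h | h
          · exfalso
            have h1 := SP lo k.val (by omega) k.isLt
            have h2 := SP hi k.val h k.isLt
            nlinarith [mul_pos h1 h2]
          · omega
      have h1 := Set.ncard_le_ncard hsub (Set.toFinite _)
      rw [WheelAux.ncard_Ioo_fin (2*n-1) lo hi (le_of_lt hhim)] at h1
      omega
    · -- positive side contains everything outside [lo, hi]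
      have hsup : {k : Fin (2*n-1) | k.val < lo ∨ hi < k.val}
          ⊆ {k : Fin (2*n-1) | k ≠ i ∧ k ≠ j ∧
            0 < sideVal (wpos n c R θ (some i)) (wpos n c R θ (some j)) (wpos n c R θ (some k)) *
              sideVal (wpos n c R θ (some i)) (wpos n c R θ (some j)) c} := by
        intro k hk
        simp only [Set.mem_setOf_eq] at hk ⊢
        have hkv : k.val ≠ lo ∧ k.val ≠ hi := by omega
        obtain ⟨hki, hkj⟩ := (hk_ne k).2 hkv
        refine ⟨hki, hkj, ?_⟩
        rw [hProd k]
        rcases hk with h | h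
        · have h1 := SN lo k.val h (by omega)
          have h2 := SN hi k.val (by omega) hhim
          exact mul_pos hC (mul_pos_of_neg_of_neg h1 h2)
        · have h1 := SP lo k.val (by omega) k.isLt
          have h2 := SP hi k.val h k.isLt
          exact mul_pos hC (mul_pos h1 h2)
      have h1 := Set.ncard_le_ncard hsup (Set.toFinite _)
      rw [WheelAux.ncard_out_fin (2*n-1) lo hi (le_of_lt hlohi) hhim] at h1
      omega
  · -- minor arc is outside [lo, hi] : cc < 0
    have hccneg : cc < 0 := by
      rw [hccdef]
      apply WheelAux.cos_sign_neg hMr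
      · have h1 : ((2*n-1:ℕ):ℝ) ≤ ((2*(hi-lo):ℕ):ℝ) := by exact_mod_cast hD
        rw [hmR] at h1
        push_cast [Nat.cast_sub (le_of_lt hlohi)] at h1
        have hne : 2*(hi-lo) ≠ (2*n-1) := by omega
        have h2 : ((2*n-1:ℕ):ℝ) ≠ ((2*(hi-lo):ℕ):ℝ) := by
          exact_mod_cast hne.symm
        rw [hmR] at h2
        push_cast [Nat.cast_sub (le_of_lt hlohi)] at h2
        rcases lt_or_eq_of_le h1 with h | h
        · linarith
        · exact absurd h h2
      · have h1 : (hi:ℝ) < ((2*n-1:ℕ):ℝ) := by exact_mod_cast hhim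
        rw [hmR] at h1
        have h2 : (0:ℝ) ≤ (lo:ℝ) := Nat.cast_nonneg lo
        linarith
    have hC : 8*R^4*s1^2*cc < 0 := mul_neg_of_pos_of_neg (mul_pos hR4 hs1sq) hccneg
    refine ⟨claim1 (ne_of_lt hccneg), claim2, ?_, ?_⟩
    · -- negative side outside [lo, hi]
      have hsub : {k : Fin (2*n-1) | k ≠ i ∧ k ≠ j ∧
          sideVal (wpos n c R θ (some i)) (wpos n c R θ (some j)) (wpos n c R θ (some k)) *
            sideVal (wpos n c R θ (some i)) (wpos n c R θ (some j)) c < 0}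
          ⊆ {k : Fin (2*n-1) | k.val < lo ∨ hi < k.val} := by
        intro k hk
        simp only [Set.mem_setOf_eq] at hk ⊢
        obtain ⟨hki, hkj, hneg⟩ := hk
        have hkv := (hk_ne k).1 ⟨hki, hkj⟩
        rw [hProd k] at hneg
        have hss : 0 < Real.sin (π*((k.val:ℝ)-(lo:ℝ))/Mr) * Real.sin (π*((k.val:ℝ)-(hi:ℝ))/Mr) := by
          by_contra hcon
          push_neg at hcon
          rcases lt_or_eq_of_le hcon with h | h
          · nlinarith [mul_pos_of_neg_of_neg hC h]
          · rw [h, mul_zero] at hneg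
            exact lt_irrefl 0 hneg
        by_contra hcon
        push_neg at hcon
        have h1 := SP lo k.val (by omega) k.isLt
        have h2 := SN hi k.val (by omega) hhim
        nlinarith [mul_neg_of_pos_of_neg h1 h2]
      have h1 := Set.ncard_le_ncard hsub (Set.toFinite _)
      rw [WheelAux.ncard_out_fin (2*n-1) lo hi (le_of_lt hlohi) hhim] at h1
      omega
    · -- positive side contains the open interval (lo, hi)
      have hsup : {k : Fin (2*n-1) | lo < k.val ∧ k.val < hi}
          ⊆ {k : Fin (2*n-1) | k ≠ i ∧ k ≠ j ∧
            0 < sideVal (wpos n c R θ (some i)) (wpos n c R θ (some j)) (wpos n c R θ (some k)) *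
              sideVal (wpos n c R θ (some i)) (wpos n c R θ (some j)) c} := by
        intro k hk
        simp only [Set.mem_setOf_eq] at hk ⊢
        have hkv : k.val ≠ lo ∧ k.val ≠ hi := by omega
        obtain ⟨hki, hkj⟩ := (hk_ne k).2 hkv
        refine ⟨hki, hkj, ?_⟩
        rw [hProd k]
        have h1 := SP lo k.val hk.1 k.isLt
        have h2 := SN hi k.val hk.2 hhim
        exact mul_pos_of_neg_of_neg hC (mul_neg_of_pos_of_neg h1 h2)
      have h1 := Set.ncard_le_ncard hsup (Set.toFinite _)
      rw [WheelAux.ncard_Ioo_fin (2*n-1) lo hi (le_of_lt hhim)] at h1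
      omega
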